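/- If u and v are two linearly independent vectors in a real vector space and m ≥ 1, then the m+1 symmetric tensor powers (a·u + b·v)^{⊙m}, as (a,b) ranges over m+1 pairwise linearly independent vectors in ℝ², are linearly independent in the m-th symmetric power of the vector space. -/

import Mathlib

open Polynomial Finset


/-- The symmetric power `w^{⊙m}` of a vector, modeled faithfully as the degree-`m`
polynomial function `φ ↦ (φ w)^m` on the dual space (char-0 field, so this
embedding of `Sym^m V` into functions on the dual is injective). -/

lemma key (n : ℕ) (c A d : Fin (n+1) → ℝ)
    (h : ∀ x : ℝ, ∑ k, c k * (A k * x + d k)^n = 0) (j : ℕ) (hj : j ≤ n) :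
    ∑ k, c k * A k ^ j * d k ^ (n - j) = 0 := by
  set P : ℝ[X] := ∑ i ∈ range (n+1),
      C ((∑ k, c k * A k ^ i * d k ^ (n-i)) * (n.choose i)) * X ^ i with hP
  have heval : ∀ x : ℝ, P.eval x = ∑ k, c k * (A k * x + d k)^n := by
    intro x
    rw [hP]
    simp only [eval_finset_sum, eval_mul, eval_C, eval_pow, eval_X]
    have h1 : ∀ k, c k * (A k * x + d k)^n
        = ∑ i ∈ range (n+1), c k * A k ^ i * d k ^ (n-i) * (n.choose i) * x ^ i := by
      intro k
      rw [add_pow, Finset.mul_sum]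
      refine Finset.sum_congr rfl fun i _ => ?_
      ring
    rw [Finset.sum_congr rfl fun k (_ : k ∈ Finset.univ) => h1 k, Finset.sum_comm]
    refine Finset.sum_congr rfl fun i _ => ?_
    rw [Finset.sum_mul, Finset.sum_mul]
  have hP0 : P = 0 := Polynomial.funext fun x => by rw [heval x, h x, eval_zero]
  have hcoeff : P.coeff j = (∑ k, c k * A k ^ j * d k ^ (n-j)) * (n.choose j) := by
    rw [hP, finset_sum_coeff]
    simp only [coeff_C_mul, coeff_X_pow]
    rw [Finset.sum_eq_single j]
    · simp
    · intro i _ hij; simp [Ne.symm hij]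
    · intro hji; exact absurd (Finset.mem_range.mpr (Nat.lt_succ_of_le hj)) hji
  have h2 := hcoeff.symm.trans (by rw [hP0, coeff_zero])
  rcases mul_eq_zero.mp h2 with h' | h'
  · exact h'
  · exact absurd h' (Nat.cast_ne_zero.mpr (Nat.choose_pos hj).ne')

lemma det_ne (p q : ℝ × ℝ) (h : LinearIndependent ℝ ![p, q]) :
    p.1 * q.2 - q.1 * p.2 ≠ 0 := by
  intro hD
  have H := LinearIndependent.pair_iff.mp h
  have h1 := H q.2 (-p.2) (by
    apply Prod.ext <;> simp [smul_eq_mul] <;> nlinarith [hD])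
  have h2 := H q.1 (-p.1) (by
    apply Prod.ext <;> simp [smul_eq_mul] <;> nlinarith [hD])
  have hp : p = 0 := Prod.ext (by simpa using h2.2) (by simpa using h1.2)
  have := (H 1 0 (by simp [hp])).1
  norm_num at this

noncomputable def symPowFun (V : Type*) [AddCommGroup V] [Module ℝ V] (m : ℕ) (w : V) :
    Module.Dual ℝ V → ℝ := fun φ => (φ w) ^ m

/-- If u, v are linearly independent and (a k) are m+1 pairwise linearly independent
pairs in ℝ², then the symmetric powers ((a k).1 • u + (a k).2 • v)^{⊙m} are
linearly independent in Sym^m V. -/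
theorem symPow_linearIndependent_of_pairwise
    (V : Type*) [AddCommGroup V] [Module ℝ V] (u v : V)
    (huv : LinearIndependent ℝ ![u, v]) (m : ℕ) (hm : 1 ≤ m)
    (a : Fin (m + 1) → ℝ × ℝ)
    (ha : ∀ i j, i ≠ j → LinearIndependent ℝ ![a i, a j]) :
    LinearIndependent ℝ
      (fun k : Fin (m + 1) => symPowFun V m ((a k).1 • u + (a k).2 • v)) := by
  rw [Fintype.linearIndependent_iff]
  intro c hc
  -- Step 1: dual functionals realize arbitrary (x, y)
  have huvne : u ≠ v := by
    intro h
    have := (LinearIndependent.pair_iff.mp huv 1 (-1) (by simp [h])).1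
    norm_num at this
  have hsli : LinearIndepOn ℝ id (Set.range ![u, v]) := huv.linearIndepOn_id
  let B : Module.Basis _ ℝ V := Module.Basis.extend hsli
  have hu : u ∈ hsli.extend (Set.subset_univ _) :=
    hsli.subset_extend _ ⟨0, rfl⟩
  have hv : v ∈ hsli.extend (Set.subset_univ _) :=
    hsli.subset_extend _ ⟨1, rfl⟩
  have hrepu : B.repr u = Finsupp.single ⟨u, hu⟩ 1 := by
    have h0 := B.repr_self (⟨u, hu⟩ : hsli.extend (Set.subset_univ _))
    simpa only [B, Module.Basis.extend_apply_self] using h0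
  have hrepv : B.repr v = Finsupp.single ⟨v, hv⟩ 1 := by
    have h0 := B.repr_self (⟨v, hv⟩ : hsli.extend (Set.subset_univ _))
    simpa only [B, Module.Basis.extend_apply_self] using h0
  have hne : (⟨u, hu⟩ : hsli.extend (Set.subset_univ _)) ≠ ⟨v, hv⟩ := by
    simp [Subtype.ext_iff, huvne]
  have hxy : ∀ x y : ℝ, ∑ k, c k * ((a k).1 * x + (a k).2 * y)^m = 0 := by
    intro x y
    set φ : Module.Dual ℝ V := x • B.coord ⟨u, hu⟩ + y • B.coord ⟨v, hv⟩ with hφ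
    have hφu : φ u = x := by
      simp [hφ, Module.Basis.coord_apply, hrepu, Finsupp.single_apply, hne, hne.symm]
    have hφv : φ v = y := by
      simp [hφ, Module.Basis.coord_apply, hrepv, Finsupp.single_apply, hne, hne.symm]
    have := congrFun hc φ
    simp only [Finset.sum_apply, Pi.smul_apply, Pi.zero_apply, smul_eq_mul,
      symPowFun] at this
    rw [← this]
    refine Finset.sum_congr rfl fun k _ => ?_
    rw [map_add, map_smul, map_smul, hφu, hφv, smul_eq_mul, smul_eq_mul]
  -- Step 2: pick shear parameter s
  have hDet : ∀ i j, i ≠ j → (a i).1 * (a j).2 - (a j).1 * (a i).2 ≠ 0 :=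
    fun i j hij => det_ne _ _ (ha i j hij)
  have hlt : (1 : ℕ) < m + 1 := Nat.succ_lt_succ hm
  have hex : ∀ k : Fin (m+1), ∃ j, j ≠ k := by
    intro k
    rcases eq_or_ne k 0 with rfl | h
    · exact ⟨⟨1, hlt⟩, by simp [Fin.ext_iff]⟩
    · exact ⟨0, Ne.symm h⟩
  obtain ⟨s, hs⟩ := Infinite.exists_notMem_finset
    (Finset.image (fun k => -(a k).2 / (a k).1) Finset.univ)
  set d : Fin (m+1) → ℝ := fun k => (a k).2 + s * (a k).1 with hd_def
  have hd : ∀ k, d k ≠ 0 := by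
    intro k hk
    obtain ⟨j, hj⟩ := hex k
    by_cases h1 : (a k).1 = 0
    · have h2 : (a k).2 = 0 := by simpa [hd_def, h1] using hk
      exact hDet k j (Ne.symm hj) (by rw [h1, h2]; ring)
    · apply hs
      refine Finset.mem_image.mpr ⟨k, Finset.mem_univ _, ?_⟩
      have : s * (a k).1 = -(a k).2 := by
        simpa [hd_def, eq_neg_iff_add_eq_zero, add_comm] using hk
      field_simp
      linarith [this]
  -- Step 3: single-variable identity and coefficient extraction
  have hx1 : ∀ x : ℝ, ∑ k, c k * ((a k).1 * x + d k)^m = 0 := by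
    intro x
    rw [← hxy (x + s) 1]
    refine Finset.sum_congr rfl fun k _ => ?_
    simp only [hd_def]
    ring
  have hcoef : ∀ j : ℕ, j ≤ m → ∑ k, c k * (a k).1 ^ j * d k ^ (m - j) = 0 := by
    intro j hj
    exact key m c (fun k => (a k).1) d hx1 j hj
  -- Step 4: Vandermonde
  set t : Fin (m+1) → ℝ := fun k => (a k).1 / d k with ht_def
  have htinj : ∀ i j, i ≠ j → t i ≠ t j := by
    intro i j hij he
    have h2 : (a i).1 * d j = (a j).1 * d i :=
      (div_eq_div_iff (hd i) (hd j)).mp he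
    apply hDet i j hij
    simp only [hd_def] at h2
    nlinarith [h2]
  set w : Fin (m+1) → ℝ := fun k => c k * d k ^ m with hw_def
  have hvm : Matrix.vecMul w (Matrix.vandermonde t) = 0 := by
    funext j
    have hj : (j : ℕ) ≤ m := Fin.is_le j
    simp only [Matrix.vecMul, dotProduct, Matrix.vandermonde,
      Matrix.of_apply, Pi.zero_apply]
    rw [← hcoef j hj]
    refine Finset.sum_congr rfl fun k _ => ?_
    have hsplit : d k ^ m = d k ^ (m - (j:ℕ)) * d k ^ (j:ℕ) := by
      rw [← pow_add, Nat.sub_add_cancel hj]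
    simp only [hw_def, ht_def, div_pow]
    rw [hsplit]
    field_simp [hd k]
  have hdet : (Matrix.vandermonde t).det ≠ 0 := by
    rw [Matrix.det_vandermonde]
    refine Finset.prod_ne_zero_iff.mpr fun i _ => ?_
    refine Finset.prod_ne_zero_iff.mpr fun j hj => ?_
    have hij : i ≠ j := (Finset.mem_Ioi.mp hj).ne
    exact sub_ne_zero.mpr (Ne.symm (htinj i j hij))
  have hw0 : w = 0 := Matrix.eq_zero_of_vecMul_eq_zero hdet hvm
  intro k
  have := congrFun hw0 k
  simp only [hw_def, Pi.zero_apply] at this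
  exact (mul_eq_zero.mp this).resolve_right (pow_ne_zero m (hd k))
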